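/- Let S and A be nonempty finite sets, π a policy, R : S×A → ℝ a reward, γ ∈ [0,1), P̄ a transition kernel with P̄(s'|s,a) > 0 for all s, a, s', and β : S×A → ℝ with β(s,a) ≥ 0. Let 𝒫 be the sa-rectangular KL uncertainty set consisting of all transition kernels P with D(P(·|s,a)‖P̄(·|s,a)) ≤ β(s,a) for every (s,a). Suppose κ : S×A → ℝ with κ(s,a) > 0, ω : S×A → ℝ, and v* : S → ℝ are such that the kernel P*(s'|s,a) = P̄(s'|s,a)·exp(−(v*(s')−ω(s,a))/κ(s,a)) satisfies, for every (s,a): ∑_{s'} P*(s'|s,a) = 1 and ∑_{s'} P*(s'|s,a)·(−(v*(s')−ω(s,a))/κ(s,a)) = β(s,a), and moreover T_{P*} v* = v*. Then P* belongs to 𝒫, and for every kernel P ∈ 𝒫 and every w : S → ℝ with T_P w = w one has v*(s) ≤ w(s) for all s ∈ S; consequently ∑_s μ(s)·v*(s) ≤ ∑_s μ(s)·w(s) for every probability distribution μ on S, i.e., P* is an adversarial (worst-case) kernel for the KL uncertainty set. -/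

import Mathlib

/-- The Bellman operator of kernel `P` for policy `π`:
`(T_P v)(s) = ∑ a, π(a|s)·(R(s,a) + γ·∑ s', P(s'|s,a)·v(s'))`. -/
noncomputable def bellman {S A : Type*} [Fintype S] [Fintype A]
    (π : S → A → ℝ) (R : S → A → ℝ) (γ : ℝ) (P : S → A → S → ℝ)
    (v : S → ℝ) : S → ℝ :=
  fun s => ∑ a, π s a * (R s a + γ * ∑ s', P s a s' * v s')

/-- Gibbs' inequality: KL divergence is nonnegative. -/
lemma gibbs_nonneg {S : Type*} [Fintype S] (p q : S → ℝ)
    (hp : ∀ s, 0 ≤ p s) (hq : ∀ s, 0 < q s)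
    (hps : ∑ s, p s = 1) (hqs : ∑ s, q s = 1) :
    0 ≤ ∑ s, p s * Real.log (p s / q s) := by
  have h : ∀ s ∈ Finset.univ, p s - q s ≤ p s * Real.log (p s / q s) := by
    intro s _
    rcases eq_or_lt_of_le (hp s) with h0 | h0
    · rw [← h0]
      simp
      linarith [hq s]
    · have hpos : 0 < q s / p s := div_pos (hq s) h0
      have hle := Real.log_le_sub_one_of_pos hpos
      have hlog : Real.log (p s / q s) = - Real.log (q s / p s) := by
        rw [← Real.log_inv, inv_div]
      rw [hlog]
      have hqp : q s / p s * p s = q s := div_mul_cancel₀ _ h0.ne'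
      nlinarith
  calc (0 : ℝ) = ∑ s, (p s - q s) := by
        rw [Finset.sum_sub_distrib, hps, hqs]; ring
    _ ≤ _ := Finset.sum_le_sum h

/-- For the sa-rectangular KL uncertainty set around a positive nominal
kernel, the exponentially tilted kernel
`P*(s'|s,a) = P̄(s'|s,a)·exp(−(v*(s')−ω(s,a))/κ(s,a))` (normalized, with KL divergence
`β(s,a)` in every state-action pair, and with `v*` its Bellman fixed point) belongs to
the uncertainty set and is an adversarial (worst-case) kernel: its value function is a
componentwise lower bound on the value function of any kernel in the set, hence also
minimizes the return for every initial distribution `μ`. -/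
theorem kl_tilted_kernel_is_adversarial
    {S A : Type*} [Fintype S] [Nonempty S] [Fintype A] [Nonempty A]
    (π : S → A → ℝ) (hπ_nonneg : ∀ s a, 0 ≤ π s a) (hπ_sum : ∀ s, ∑ a, π s a = 1)
    (R : S → A → ℝ) (γ : ℝ) (hγ0 : 0 ≤ γ) (hγ1 : γ < 1)
    (Pbar : S → A → S → ℝ) (hPbar_pos : ∀ s a s', 0 < Pbar s a s')
    (hPbar_sum : ∀ s a, ∑ s', Pbar s a s' = 1)
    (β : S → A → ℝ) (hβ : ∀ s a, 0 ≤ β s a)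
    (𝒰 : Set (S → A → S → ℝ))
    (h𝒰 : 𝒰 = {P | (∀ s a s', 0 ≤ P s a s') ∧ (∀ s a, ∑ s', P s a s' = 1) ∧
      ∀ s a, ∑ s', P s a s' * Real.log (P s a s' / Pbar s a s') ≤ β s a})
    (κ : S → A → ℝ) (hκ : ∀ s a, 0 < κ s a) (ω : S → A → ℝ) (vstar : S → ℝ)
    (Pstar : S → A → S → ℝ)
    (hPstar_def : ∀ s a s',
      Pstar s a s' = Pbar s a s' * Real.exp (-(vstar s' - ω s a) / κ s a))
    (hPstar_sum : ∀ s a, ∑ s', Pstar s a s' = 1)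
    (hPstar_kl : ∀ s a,
      ∑ s', Pstar s a s' * (-(vstar s' - ω s a) / κ s a) = β s a)
    (hfix : bellman π R γ Pstar vstar = vstar) :
    Pstar ∈ 𝒰 ∧
      ∀ P ∈ 𝒰, ∀ w : S → ℝ, bellman π R γ P w = w →
        (∀ s, vstar s ≤ w s) ∧
          ∀ μ : S → ℝ, (∀ s, 0 ≤ μ s) → (∑ s, μ s = 1) →
            ∑ s, μ s * vstar s ≤ ∑ s, μ s * w s := by
  subst h𝒰
  have hPstar_pos : ∀ s a s', 0 < Pstar s a s' := by
    intro s a s'; rw [hPstar_def]; exact mul_pos (hPbar_pos s a s') (Real.exp_pos _)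
  have hlog : ∀ s a s',
      Real.log (Pstar s a s' / Pbar s a s') = -(vstar s' - ω s a) / κ s a := by
    intro s a s'
    rw [hPstar_def, mul_comm, mul_div_assoc, div_self (hPbar_pos s a s').ne',
      mul_one, Real.log_exp]
  have hmem : Pstar ∈ {P : S → A → S → ℝ | (∀ s a s', 0 ≤ P s a s') ∧
      (∀ s a, ∑ s', P s a s' = 1) ∧
      ∀ s a, ∑ s', P s a s' * Real.log (P s a s' / Pbar s a s') ≤ β s a} := by
    refine ⟨fun s a s' => (hPstar_pos s a s').le, hPstar_sum, fun s a => ?_⟩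
    have : ∑ s', Pstar s a s' * Real.log (Pstar s a s' / Pbar s a s') = β s a := by
      rw [← hPstar_kl s a]
      exact Finset.sum_congr rfl fun s' _ => by rw [hlog]
    linarith [this.le]
  refine ⟨hmem, ?_⟩
  rintro P ⟨hP0, hP1, hPkl⟩ w hw
  -- value identity: vstar s' = ω s a - κ s a * log(Pstar/Pbar)
  have hv : ∀ s a s', vstar s' =
      ω s a - κ s a * Real.log (Pstar s a s' / Pbar s a s') := by
    intro s a s'
    rw [hlog]
    field_simp [(hκ s a).ne']
    ring
  -- key minimization lemma: Pstar minimizes expected vstar over the KL ball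
  have key : ∀ s a, ∑ s', Pstar s a s' * vstar s' ≤ ∑ s', P s a s' * vstar s' := by
    intro s a
    have hstar : ∑ s', Pstar s a s' * vstar s' = ω s a - κ s a * β s a := by
      calc ∑ s', Pstar s a s' * vstar s'
          = ∑ s', (Pstar s a s' * ω s a -
              κ s a * (Pstar s a s' * (-(vstar s' - ω s a) / κ s a))) := by
            refine Finset.sum_congr rfl fun s' _ => ?_
            field_simp [(hκ s a).ne']
            ring
        _ = (∑ s', Pstar s a s') * ω s a - κ s a * β s a := by
            rw [Finset.sum_sub_distrib, ← Finset.sum_mul, ← Finset.mul_sum,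
              hPstar_kl s a]
        _ = ω s a - κ s a * β s a := by rw [hPstar_sum s a, one_mul]
    have hPexp : ∑ s', P s a s' * vstar s' =
        ω s a - κ s a * ∑ s', P s a s' * Real.log (Pstar s a s' / Pbar s a s') := by
      calc ∑ s', P s a s' * vstar s'
          = ∑ s', (P s a s' * ω s a -
              κ s a * (P s a s' * Real.log (Pstar s a s' / Pbar s a s'))) := by
            refine Finset.sum_congr rfl fun s' _ => ?_
            rw [hv s a s']
            ring
        _ = (∑ s', P s a s') * ω s a -
            κ s a * ∑ s', P s a s' * Real.log (Pstar s a s' / Pbar s a s') := by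
            rw [Finset.sum_sub_distrib, ← Finset.sum_mul, ← Finset.mul_sum]
        _ = _ := by rw [hP1 s a, one_mul]
    -- decompose the log sum
    have hdecomp : ∑ s', P s a s' * Real.log (Pstar s a s' / Pbar s a s') =
        (∑ s', P s a s' * Real.log (P s a s' / Pbar s a s')) -
        (∑ s', P s a s' * Real.log (P s a s' / Pstar s a s')) := by
      rw [← Finset.sum_sub_distrib]
      refine Finset.sum_congr rfl fun s' _ => ?_
      rcases eq_or_lt_of_le (hP0 s a s') with h0 | h0
      · rw [← h0]; ring
      · rw [Real.log_div (hPstar_pos s a s').ne' (hPbar_pos s a s').ne',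
          Real.log_div h0.ne' (hPbar_pos s a s').ne',
          Real.log_div h0.ne' (hPstar_pos s a s').ne']
        ring
    have hgibbs : 0 ≤ ∑ s', P s a s' * Real.log (P s a s' / Pstar s a s') :=
      gibbs_nonneg (fun s' => P s a s') (fun s' => Pstar s a s')
        (hP0 s a) (hPstar_pos s a) (hP1 s a) (hPstar_sum s a)
    have hL : ∑ s', P s a s' * Real.log (Pstar s a s' / Pbar s a s') ≤ β s a := by
      rw [hdecomp]
      linarith [hPkl s a]
    rw [hstar, hPexp]
    have := mul_le_mul_of_nonneg_left hL (hκ s a).le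
    linarith
  -- monotonicity step: vstar ≤ T_P vstar pointwise
  have hstep : ∀ s, vstar s ≤ bellman π R γ P vstar s := by
    intro s
    conv_lhs => rw [← hfix]
    unfold bellman
    refine Finset.sum_le_sum fun a _ => ?_
    have := mul_le_mul_of_nonneg_left (key s a) hγ0
    nlinarith [hπ_nonneg s a]
  -- contraction argument
  have hvw : ∀ s, vstar s ≤ w s := by
    obtain ⟨s₀, -, hs₀⟩ := Finset.exists_max_image Finset.univ
      (fun s => vstar s - w s) Finset.univ_nonempty
    have hM : ∀ s, vstar s - w s ≤ vstar s₀ - w s₀ := fun s => hs₀ s (Finset.mem_univ s)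
    set M := vstar s₀ - w s₀ with hMdef
    have hMle : M ≤ γ * M := by
      have h1 : vstar s₀ - w s₀ ≤ bellman π R γ P vstar s₀ - bellman π R γ P w s₀ := by
        have := hstep s₀
        rw [show bellman π R γ P w s₀ = w s₀ from congrFun hw s₀]
        linarith
      have h2 : bellman π R γ P vstar s₀ - bellman π R γ P w s₀ ≤ γ * M := by
        unfold bellman
        rw [← Finset.sum_sub_distrib]
        have : ∀ a ∈ Finset.univ,
            π s₀ a * (R s₀ a + γ * ∑ s', P s₀ a s' * vstar s') -
            π s₀ a * (R s₀ a + γ * ∑ s', P s₀ a s' * w s') ≤ π s₀ a * (γ * M) := by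
          intro a _
          have hinner : ∑ s', P s₀ a s' * vstar s' - ∑ s', P s₀ a s' * w s' ≤ M := by
            rw [← Finset.sum_sub_distrib]
            calc ∑ s', (P s₀ a s' * vstar s' - P s₀ a s' * w s')
                ≤ ∑ s', P s₀ a s' * M := by
                  refine Finset.sum_le_sum fun s' _ => ?_
                  have := mul_le_mul_of_nonneg_left (hM s') (hP0 s₀ a s')
                  nlinarith [hP0 s₀ a s']
              _ = M := by rw [← Finset.sum_mul, hP1 s₀ a, one_mul]
          have hγinner : γ * (∑ s', P s₀ a s' * vstar s' - ∑ s', P s₀ a s' * w s')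
              ≤ γ * M := mul_le_mul_of_nonneg_left hinner hγ0
          have := mul_le_mul_of_nonneg_left hγinner (hπ_nonneg s₀ a)
          nlinarith
        calc ∑ a, (π s₀ a * (R s₀ a + γ * ∑ s', P s₀ a s' * vstar s') -
              π s₀ a * (R s₀ a + γ * ∑ s', P s₀ a s' * w s'))
            ≤ ∑ a, π s₀ a * (γ * M) := Finset.sum_le_sum this
          _ = γ * M := by rw [← Finset.sum_mul, hπ_sum s₀, one_mul]
      linarith
    have hM0 : M ≤ 0 := by nlinarith
    intro s
    have := hM s
    linarith
  refine ⟨hvw, fun μ hμ0 hμ1 => ?_⟩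
  exact Finset.sum_le_sum fun s _ => mul_le_mul_of_nonneg_left (hvw s) (hμ0 s)
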